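/- Fix 1/2 < h₁ ≤ H̄₁ < 1 and let ε ∈ (0, min(1 − H̄₁, h₁ − 1/2)). There exists a constant C > 0 (depending only on ε, h₁, H̄₁) such that for all H₁, H₁′ ∈ [h₁, H̄₁], all H₂ ∈ (1/2, 1), and all s, x, y ∈ ℝ: |K_{H₁,H₂}(s,x,y) − K_{H₁′,H₂}(s,x,y)| ≤ C |H₁ − H₁′| ( K_{h₁−ε, H₂}(s,x,y) + K_{H̄₁+ε, H₂}(s,x,y) ). -/

import Mathlib

open MeasureTheory

/-- `u₊^p`: equals `u ^ p` (real power) if `u > 0`, and `0` otherwise. -/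
noncomputable def plusPow (u p : ℝ) : ℝ := if 0 < u then u ^ p else 0

/-- The kernel `K_{p,q}(s,x,y)` (defined pointwise for arbitrary parameters `p, q`). -/
noncomputable def rosenblattK (H₁ H₂ s x y : ℝ) : ℝ :=
  plusPow (s - x) (H₁ / 2 - 1) * plusPow (s - y) (H₂ / 2 - 1) +
  plusPow (s - x) (H₂ / 2 - 1) * plusPow (s - y) (H₁ / 2 - 1)

lemma plusPow_nonneg (u p : ℝ) : 0 ≤ plusPow u p := by
  unfold plusPow; split
  · positivity
  · exact le_refl 0

lemma abs_exp_sub_exp_le (x y : ℝ) :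
    |Real.exp x - Real.exp y| ≤ |x - y| * (Real.exp x + Real.exp y) := by
  wlog h : y ≤ x with H
  · rw [abs_sub_comm, abs_sub_comm x y, add_comm]
    exact H y x (le_of_not_ge h)
  have hexp : Real.exp (y - x) * Real.exp x = Real.exp y := by
    rw [← Real.exp_add]; ring_nf
  have h1 : Real.exp x - Real.exp y ≤ (x - y) * Real.exp x := by
    nlinarith [Real.add_one_le_exp (y - x), Real.exp_pos x]
  have h0 : 0 ≤ Real.exp x - Real.exp y := by
    have := Real.exp_le_exp.mpr h; linarith
  rw [abs_of_nonneg h0, abs_of_nonneg (by linarith : (0:ℝ) ≤ x - y)]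
  nlinarith [Real.exp_pos y, h]

/-- `|log u| * u ^ p ≤ (1/δ) * (u^(p+δ) + u^(p-δ))` for `u > 0`, `δ > 0`. -/
lemma abs_log_mul_rpow_le (u δ p : ℝ) (hu : 0 < u) (hδ : 0 < δ) :
    |Real.log u| * u ^ p ≤ (1/δ) * (u ^ (p + δ) + u ^ (p - δ)) := by
  rcases le_total 1 u with h1 | h1
  · have hlog : 0 ≤ Real.log u := Real.log_nonneg h1
    have key : δ * Real.log u ≤ u ^ δ := by
      have := Real.log_le_sub_one_of_pos (Real.rpow_pos_of_pos hu δ)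
      rw [Real.log_rpow hu] at this
      linarith
    rw [abs_of_nonneg hlog]
    have hpd : u ^ (p + δ) = u ^ p * u ^ δ := by rw [Real.rpow_add hu]
    have hup : 0 ≤ u ^ p := (Real.rpow_pos_of_pos hu p).le
    have humd : 0 ≤ u ^ (p - δ) := (Real.rpow_pos_of_pos hu _).le
    rw [hpd]
    rw [div_mul_eq_mul_div, le_div_iff₀ hδ] at *
    nlinarith [key, hup]
  · have hlog : Real.log u ≤ 0 := Real.log_nonpos hu.le h1
    have key : δ * (-Real.log u) ≤ u ^ (-δ) := by
      have := Real.log_le_sub_one_of_pos (Real.rpow_pos_of_pos hu (-δ))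
      rw [Real.log_rpow hu] at this
      nlinarith
    rw [abs_of_nonpos hlog]
    have hpd : u ^ (p - δ) = u ^ p * u ^ (-δ) := by
      rw [← Real.rpow_add hu]; ring_nf
    have hup : 0 ≤ u ^ p := (Real.rpow_pos_of_pos hu p).le
    have hupd : 0 ≤ u ^ (p + δ) := (Real.rpow_pos_of_pos hu _).le
    rw [hpd]
    rw [div_mul_eq_mul_div, le_div_iff₀ hδ] at *
    nlinarith [key, hup]

lemma rpow_le_rpow_add (u A B c : ℝ) (hu : 0 < u) (h1 : A ≤ c) (h2 : c ≤ B) :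
    u ^ c ≤ u ^ A + u ^ B := by
  rcases le_total 1 u with h | h
  · have : u ^ c ≤ u ^ B := Real.rpow_le_rpow_of_exponent_le h h2
    have hA : 0 ≤ u ^ A := (Real.rpow_pos_of_pos hu A).le
    linarith
  · have : u ^ c ≤ u ^ A := Real.rpow_le_rpow_of_exponent_ge hu h h1
    have hB : 0 ≤ u ^ B := (Real.rpow_pos_of_pos hu B).le
    linarith

/-- Key per-factor estimate. -/
lemma plusPow_diff (δ A B p q u : ℝ) (hδ : 0 < δ)
    (hpA : A + δ ≤ p) (hpB : p ≤ B - δ) (hqA : A + δ ≤ q) (hqB : q ≤ B - δ) :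
    |plusPow u p - plusPow u q| ≤
      (4/δ) * |p - q| * (plusPow u A + plusPow u B) := by
  unfold plusPow
  split
  case isTrue hu =>
    have hp1 : u ^ p = Real.exp (Real.log u * p) := by
      rw [Real.rpow_def_of_pos hu]
    have hq1 : u ^ q = Real.exp (Real.log u * q) := by
      rw [Real.rpow_def_of_pos hu]
    have step1 : |u ^ p - u ^ q| ≤ |p - q| * (|Real.log u| * u ^ p + |Real.log u| * u ^ q) := by
      rw [hp1, hq1]
      calc |Real.exp (Real.log u * p) - Real.exp (Real.log u * q)|
          ≤ |Real.log u * p - Real.log u * q| *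
            (Real.exp (Real.log u * p) + Real.exp (Real.log u * q)) :=
            abs_exp_sub_exp_le _ _
        _ = |p - q| * (|Real.log u| * Real.exp (Real.log u * p)
              + |Real.log u| * Real.exp (Real.log u * q)) := by
            rw [← mul_sub, abs_mul]; ring
    have hbp := abs_log_mul_rpow_le u δ p hu hδ
    have hbq := abs_log_mul_rpow_le u δ q hu hδ
    have hAB : ∀ c, A ≤ c → c ≤ B → u ^ c ≤ u ^ A + u ^ B := fun c h1 h2 =>
      rpow_le_rpow_add u A B c hu h1 h2
    have e1 : u ^ (p + δ) ≤ u ^ A + u ^ B := hAB _ (by linarith) (by linarith)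
    have e2 : u ^ (p - δ) ≤ u ^ A + u ^ B := hAB _ (by linarith) (by linarith)
    have e3 : u ^ (q + δ) ≤ u ^ A + u ^ B := hAB _ (by linarith) (by linarith)
    have e4 : u ^ (q - δ) ≤ u ^ A + u ^ B := hAB _ (by linarith) (by linarith)
    have habs : 0 ≤ |p - q| := abs_nonneg _
    have hδ' : 0 < 1/δ := by positivity
    calc |u ^ p - u ^ q|
        ≤ |p - q| * (|Real.log u| * u ^ p + |Real.log u| * u ^ q) := step1
      _ ≤ |p - q| * ((1/δ) * (u ^ (p + δ) + u ^ (p - δ))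
            + (1/δ) * (u ^ (q + δ) + u ^ (q - δ))) := by
          apply mul_le_mul_of_nonneg_left _ habs
          linarith
      _ ≤ |p - q| * ((1/δ) * ((u ^ A + u ^ B) + (u ^ A + u ^ B))
            + (1/δ) * ((u ^ A + u ^ B) + (u ^ A + u ^ B))) := by
          apply mul_le_mul_of_nonneg_left _ habs
          nlinarith
      _ = (4/δ) * |p - q| * (u ^ A + u ^ B) := by ring
  case isFalse hu =>
    simp only [sub_zero, abs_zero]
    positivity

/-- Pointwise domination of the kernel difference in the first Hurst parameter. -/
theorem kernel_difference_domination (m₁ M₁ : ℝ) (hm₁ : 1/2 < m₁) (hle : m₁ ≤ M₁)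
    (hM₁ : M₁ < 1) (ε : ℝ) (hε : ε ∈ Set.Ioo 0 (min (1 - M₁) (m₁ - 1/2))) :
    ∃ C > 0, ∀ H₁ ∈ Set.Icc m₁ M₁, ∀ H₁' ∈ Set.Icc m₁ M₁,
      ∀ H₂ ∈ Set.Ioo (1/2 : ℝ) 1, ∀ s x y : ℝ,
      |rosenblattK H₁ H₂ s x y - rosenblattK H₁' H₂ s x y| ≤
        C * |H₁ - H₁'| *
          (rosenblattK (m₁ - ε) H₂ s x y + rosenblattK (M₁ + ε) H₂ s x y) := by
  obtain ⟨hε0, hεlt⟩ := hε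
  refine ⟨4/ε, by positivity, ?_⟩
  intro H₁ hH₁ H₁' hH₁' H₂ _ s x y
  obtain ⟨h1l, h1r⟩ := hH₁
  obtain ⟨h1l', h1r'⟩ := hH₁'
  set δ := ε/2 with hδdef
  have hδ : 0 < δ := by positivity
  set A := (m₁ - ε)/2 - 1 with hA
  set B := (M₁ + ε)/2 - 1 with hB
  set p := H₁/2 - 1 with hp
  set q := H₁'/2 - 1 with hq
  have key : |plusPow (s - x) p - plusPow (s - x) q| ≤
      (4/δ) * |p - q| * (plusPow (s - x) A + plusPow (s - x) B) :=
    plusPow_diff δ A B p q (s - x) hδ (by simp only [hA, hp, hδdef]; linarith)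
      (by simp only [hB, hp, hδdef]; linarith)
      (by simp only [hA, hq, hδdef]; linarith)
      (by simp only [hB, hq, hδdef]; linarith)
  have key' : |plusPow (s - y) p - plusPow (s - y) q| ≤
      (4/δ) * |p - q| * (plusPow (s - y) A + plusPow (s - y) B) :=
    plusPow_diff δ A B p q (s - y) hδ (by simp only [hA, hp, hδdef]; linarith)
      (by simp only [hB, hp, hδdef]; linarith)
      (by simp only [hA, hq, hδdef]; linarith)
      (by simp only [hB, hq, hδdef]; linarith)
  have hpq : |p - q| = |H₁ - H₁'| / 2 := by
    rw [hp, hq]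
    rw [show H₁/2 - 1 - (H₁'/2 - 1) = (H₁ - H₁')/2 by ring]
    rw [abs_div]
    norm_num
  have hfac : (4/δ) * |p - q| = (4/ε) * |H₁ - H₁'| := by
    rw [hpq, hδdef]
    field_simp
  rw [hfac] at key key'
  unfold rosenblattK
  set gx := plusPow (s - x) (H₂ / 2 - 1) with hgx
  set gy := plusPow (s - y) (H₂ / 2 - 1) with hgy
  have hgx0 : 0 ≤ gx := plusPow_nonneg _ _
  have hgy0 : 0 ≤ gy := plusPow_nonneg _ _
  have heq : plusPow (s - x) p * gy + gx * plusPow (s - y) p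
      - (plusPow (s - x) q * gy + gx * plusPow (s - y) q)
      = (plusPow (s - x) p - plusPow (s - x) q) * gy
        + gx * (plusPow (s - y) p - plusPow (s - y) q) := by ring
  have goal_eq : plusPow (s - x) A * gy + gx * plusPow (s - y) A
      + (plusPow (s - x) B * gy + gx * plusPow (s - y) B)
      = (plusPow (s - x) A + plusPow (s - x) B) * gy
        + gx * (plusPow (s - y) A + plusPow (s - y) B) := by ring
  calc |plusPow (s - x) p * gy + gx * plusPow (s - y) p
      - (plusPow (s - x) q * gy + gx * plusPow (s - y) q)|
      = |(plusPow (s - x) p - plusPow (s - x) q) * gy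
        + gx * (plusPow (s - y) p - plusPow (s - y) q)| := by rw [heq]
    _ ≤ |(plusPow (s - x) p - plusPow (s - x) q) * gy|
        + |gx * (plusPow (s - y) p - plusPow (s - y) q)| := abs_add_le _ _
    _ = |plusPow (s - x) p - plusPow (s - x) q| * gy
        + gx * |plusPow (s - y) p - plusPow (s - y) q| := by
        rw [abs_mul, abs_mul, abs_of_nonneg hgx0, abs_of_nonneg hgy0]
    _ ≤ ((4/ε) * |H₁ - H₁'| * (plusPow (s - x) A + plusPow (s - x) B)) * gy
        + gx * ((4/ε) * |H₁ - H₁'| * (plusPow (s - y) A + plusPow (s - y) B)) := by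
        gcongr
    _ = 4/ε * |H₁ - H₁'| *
        (plusPow (s - x) A * gy + gx * plusPow (s - y) A
          + (plusPow (s - x) B * gy + gx * plusPow (s - y) B)) := by ring
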